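/- Let G be a finite simple graph, let v be a vertex of G, and let T be a set of vertices of G with v ∉ T. Let p be the number of neighbors of v lying in T, and let S ⊆ T be any set of size p such that every vertex of S has degree in G at least as large as every vertex of T \ S (i.e., S is a set of p vertices of T of highest degree in G). Then there exists a simple graph G' on the same vertex set such that every vertex has the same degree in G' as in G, the set of neighbors of v in G' lying in T is exactly S, and the neighbors of v in G' outside T are exactly the neighbors of v in G outside T. -/

import Mathlib

/-- The degree of a vertex: the number of its neighbors. -/
noncomputable def deg {V : Type*} (G : SimpleGraph V) (v : V) : ℕ :=
  (G.neighborSet v).ncard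

/-- Kleitman–Wang style lemma: if `v ∉ T` has `p` neighbors in `T` and `S` is a set of
`p` vertices of `T` of highest degree in `G`, then there is a realization `G'` of the
degree sequence of `G` in which the neighborhood of `v` restricted to `T` is exactly
`S` and the neighbors of `v` outside `T` are unchanged. -/
private def sw {V : Type*} (G : SimpleGraph V) (a b c d : V) : SimpleGraph V where
  Adj x y := x ≠ y ∧ ((G.Adj x y ∧ s(x,y) ≠ s(a,b) ∧ s(x,y) ≠ s(c,d)) ∨
      s(x,y) = s(a,c) ∨ s(x,y) = s(b,d))
  symm := by
    constructor
    intro x y ⟨h1, h2⟩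
    refine ⟨h1.symm, ?_⟩
    rw [Sym2.eq_swap (a := y), G.adj_comm y x]
    exact h2
  loopless := by constructor; intro x ⟨h1, _⟩; exact h1 rfl

private lemma sw_comm1 {V : Type*} (G : SimpleGraph V) (a b c d : V) :
    sw G a b c d = sw G b a d c := by
  ext x y
  show _ ∧ _ ↔ _ ∧ _
  rw [show s(b,a) = s(a,b) from Sym2.eq_swap, show s(d,c) = s(c,d) from Sym2.eq_swap,
    show s(b,d) = s(b,d) from rfl, show s(a,c) = s(a,c) from rfl]
  tauto

private lemma sw_comm2 {V : Type*} (G : SimpleGraph V) (a b c d : V) :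
    sw G a b c d = sw G c d a b := by
  ext x y
  show _ ∧ _ ↔ _ ∧ _
  rw [show s(c,a) = s(a,c) from Sym2.eq_swap, show s(d,b) = s(b,d) from Sym2.eq_swap]
  tauto

section swlemmas
variable {V : Type*} (G : SimpleGraph V) (a b c d : V)

lemma sw_nb_other (u : V) (hua : u ≠ a) (hub : u ≠ b) (huc : u ≠ c) (hud : u ≠ d) :
    (sw G a b c d).neighborSet u = G.neighborSet u := by
  ext y
  simp only [SimpleGraph.mem_neighborSet]
  constructor
  · rintro ⟨h1, ⟨h2, -, -⟩ | h | h⟩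
    · exact h2
    · rw [Sym2.eq_iff] at h
      rcases h with ⟨h5, -⟩ | ⟨h5, -⟩
      · exact absurd h5 hua
      · exact absurd h5 huc
    · rw [Sym2.eq_iff] at h
      rcases h with ⟨h5, -⟩ | ⟨h5, -⟩
      · exact absurd h5 hub
      · exact absurd h5 hud
  · intro h
    refine ⟨G.ne_of_adj h, Or.inl ⟨h, ?_, ?_⟩⟩
    · intro h; rw [Sym2.eq_iff] at h
      rcases h with ⟨h5, -⟩ | ⟨h5, -⟩
      · exact hua h5
      · exact hub h5
    · intro h; rw [Sym2.eq_iff] at h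
      rcases h with ⟨h5, -⟩ | ⟨h5, -⟩
      · exact huc h5
      · exact hud h5

variable (hab : a ≠ b) (hac : a ≠ c) (had : a ≠ d) (hbc : b ≠ c) (hbd : b ≠ d) (hcd : c ≠ d)
  (hGab : G.Adj a b) (hGcd : G.Adj c d) (hGac : ¬ G.Adj a c) (hGbd : ¬ G.Adj b d)

include hab hac had hbc hbd hcd hGab hGcd hGac hGbd

lemma sw_nb_a : (sw G a b c d).neighborSet a = insert c (G.neighborSet a \ {b}) := by
  ext y
  simp only [SimpleGraph.mem_neighborSet, Set.mem_insert_iff, Set.mem_diff,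
    Set.mem_singleton_iff]
  constructor
  · rintro ⟨h1, ⟨h2, h3, -⟩ | h | h⟩
    · refine Or.inr ⟨h2, fun hy => h3 (by rw [hy])⟩
    · rw [Sym2.eq_iff] at h
      rcases h with ⟨-, h6⟩ | ⟨h5, -⟩
      · exact Or.inl h6
      · exact absurd h5 hac
    · rw [Sym2.eq_iff] at h
      rcases h with ⟨h5, -⟩ | ⟨h5, -⟩
      · exact absurd h5 hab
      · exact absurd h5 had
  · rintro (rfl | ⟨h1, h2⟩)
    · exact ⟨hac, Or.inr (Or.inl rfl)⟩
    · refine ⟨G.ne_of_adj h1, Or.inl ⟨h1, ?_, ?_⟩⟩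
      · intro h; rw [Sym2.eq_iff] at h
        rcases h with ⟨-, h6⟩ | ⟨h5, -⟩
        · exact h2 h6
        · exact hab h5
      · intro h; rw [Sym2.eq_iff] at h
        rcases h with ⟨h5, -⟩ | ⟨-, h6⟩
        · exact hac h5
        · exact hGac (h6 ▸ h1)

lemma sw_nb_b : (sw G a b c d).neighborSet b = insert d (G.neighborSet b \ {a}) := by
  rw [sw_comm1]
  exact sw_nb_a G b a d c hab.symm hbd hbc had hac hcd.symm (G.adj_symm hGab) (G.adj_symm hGcd)
    hGbd hGac

lemma sw_nb_c : (sw G a b c d).neighborSet c = insert a (G.neighborSet c \ {d}) := by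
  rw [sw_comm2]
  exact sw_nb_a G c d a b hcd hac.symm hbc.symm had.symm hbd.symm hab hGcd hGab
    (fun h => hGac (G.adj_symm h)) (fun h => hGbd (G.adj_symm h))

lemma sw_nb_d : (sw G a b c d).neighborSet d = insert b (G.neighborSet d \ {c}) := by
  rw [sw_comm2, sw_comm1]
  exact sw_nb_a G d c b a hcd.symm hbd.symm had.symm hbc.symm hac.symm hab.symm
    (G.adj_symm hGcd) (G.adj_symm hGab) (fun h => hGbd (G.adj_symm h)) (fun h => hGac (G.adj_symm h))

lemma sw_deg [Fintype V] (u : V) : deg (sw G a b c d) u = deg G u := by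
  unfold deg
  by_cases hua : u = a
  · subst hua
    rw [sw_nb_a G u b c d hab hac had hbc hbd hcd hGab hGcd hGac hGbd]
    exact Set.ncard_exchange (fun h => hGac h) hGab
  · by_cases hub : u = b
    · subst hub
      rw [sw_nb_b G a u c d hab hac had hbc hbd hcd hGab hGcd hGac hGbd]
      exact Set.ncard_exchange (fun h => hGbd h) (G.adj_symm hGab)
    · by_cases huc : u = c
      · subst huc
        rw [sw_nb_c G a b u d hab hac had hbc hbd hcd hGab hGcd hGac hGbd]
        exact Set.ncard_exchange (fun h => hGac (G.adj_symm h)) hGcd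
      · by_cases hud : u = d
        · subst hud
          rw [sw_nb_d G a b c u hab hac had hbc hbd hcd hGab hGcd hGac hGbd]
          exact Set.ncard_exchange (fun h => hGbd (G.adj_symm h)) (G.adj_symm hGcd)
        · rw [sw_nb_other G a b c d u hua hub huc hud]

end swlemmas

set_option maxHeartbeats 1000000 in
lemma exists_w {V : Type*} [Fintype V] (G : SimpleGraph V) (v s t : V)
    (hvt : G.Adj v t) (hns : ¬ G.Adj v s) (hvs : v ≠ s) (hst : s ≠ t)
    (hdeg : deg G t ≤ deg G s) :
    ∃ w, w ≠ v ∧ w ≠ s ∧ w ≠ t ∧ G.Adj s w ∧ ¬ G.Adj t w := by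
  by_contra hcon
  push_neg at hcon
  have hsub : G.neighborSet s \ {t} ⊆ G.neighborSet t \ {v, s} := by
    intro w hw
    simp only [Set.mem_diff, Set.mem_singleton_iff, SimpleGraph.mem_neighborSet] at hw
    have hwv : w ≠ v := by rintro rfl; exact hns (G.adj_symm hw.1)
    have hws : w ≠ s := (G.ne_of_adj hw.1).symm
    have := hcon w hwv hws hw.2 hw.1
    simp only [Set.mem_diff, Set.mem_insert_iff, Set.mem_singleton_iff,
      SimpleGraph.mem_neighborSet]
    exact ⟨this, by tauto⟩
  have hfin : ∀ A : Set V, A.Finite := fun A => A.toFinite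
  have hle := Set.ncard_le_ncard hsub (hfin _)
  by_cases hts : G.Adj s t
  · -- t ∈ N(s), s, v ∈ N(t)
    have h1 : (G.neighborSet s \ {t}).ncard + 1 = deg G s :=
      Set.ncard_diff_singleton_add_one (by simpa using hts) (hfin _)
    have hsNt : s ∈ G.neighborSet t \ {v} := by
      simp [SimpleGraph.mem_neighborSet, G.adj_symm hts, hvs.symm]
    have h2 : (G.neighborSet t \ {v, s}).ncard + 1 = (G.neighborSet t \ {v}).ncard := by
      rw [show ({v, s} : Set V) = {v} ∪ {s} from Set.insert_eq v {s}, ← Set.diff_diff]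
      exact Set.ncard_diff_singleton_add_one (by simpa using hsNt) (hfin _)
    have h3 : (G.neighborSet t \ {v}).ncard + 1 = deg G t :=
      Set.ncard_diff_singleton_add_one (by simpa using G.adj_symm hvt) (hfin _)
    omega
  · have h1 : (G.neighborSet s \ {t}) = G.neighborSet s := by
      rw [Set.diff_singleton_eq_self]; simpa using fun h => hts h
    have h2 : (G.neighborSet t \ {v, s}).ncard ≤ (G.neighborSet t \ {v}).ncard :=
      Set.ncard_le_ncard (Set.diff_subset_diff_right (by simp)) (hfin _)
    have h3 : (G.neighborSet t \ {v}).ncard + 1 = deg G t :=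
      Set.ncard_diff_singleton_add_one (by simpa using G.adj_symm hvt) (hfin _)
    have : deg G s = (G.neighborSet s \ {t}).ncard := by rw [h1]; rfl
    omega

lemma stmt6_aux {V : Type*} [Fintype V] (v : V) (T : Set V) (hvT : v ∉ T)
    (S : Set V) (hST : S ⊆ T) :
    ∀ n (G : SimpleGraph V),
      S.ncard = (T ∩ G.neighborSet v).ncard →
      (∀ s ∈ S, ∀ t ∈ T \ S, deg G t ≤ deg G s) →
      (S \ G.neighborSet v).ncard = n →
      ∃ G' : SimpleGraph V,
        (∀ u, deg G' u = deg G u) ∧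
        (∀ t ∈ T, (G'.Adj v t ↔ t ∈ S)) ∧
        (∀ u, u ∉ T → (G'.Adj v u ↔ G.Adj v u)) := by
  intro n
  induction n with
  | zero =>
    intro G hScard hStop hmeas
    have hSsub : S ⊆ G.neighborSet v := by
      intro x hx
      by_contra hxn
      have : x ∈ S \ G.neighborSet v := Set.mem_diff_of_mem hx hxn
      have hne : (S \ G.neighborSet v).Nonempty := ⟨x, this⟩
      rw [← Set.ncard_pos (Set.toFinite _)] at hne
      omega
    have hSeq : S = T ∩ G.neighborSet v := by
      apply Set.eq_of_subset_of_ncard_le (fun x hx => Set.mem_inter (hST hx) (hSsub hx))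
        (le_of_eq hScard.symm) (Set.toFinite _)
    refine ⟨G, fun u => rfl, fun t ht => ?_, fun u _ => Iff.rfl⟩
    rw [hSeq]
    exact ⟨fun h => ⟨ht, h⟩, fun h => h.2⟩
  | succ n ih =>
    intro G hScard hStop hmeas
    obtain ⟨s0, hs0S, hs0n⟩ : ∃ s0 ∈ S, s0 ∉ G.neighborSet v := by
      have : (S \ G.neighborSet v).Nonempty := by
        rw [← Set.ncard_pos (Set.toFinite _)]; omega
      obtain ⟨x, hx⟩ := this
      exact ⟨x, hx.1, hx.2⟩
    obtain ⟨t0, ht0TN, ht0S⟩ : ∃ t0 ∈ T ∩ G.neighborSet v, t0 ∉ S := by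
      by_contra h
      push_neg at h
      have heq : T ∩ G.neighborSet v = S :=
        Set.eq_of_subset_of_ncard_le h (le_of_eq hScard) (Set.toFinite _)
      exact hs0n ((heq ▸ hs0S : s0 ∈ T ∩ G.neighborSet v)).2
    have hvs0 : v ≠ s0 := fun h => hvT (h ▸ hST hs0S)
    have hvt0a : G.Adj v t0 := ht0TN.2
    have hnvs0 : ¬ G.Adj v s0 := hs0n
    have hs0t0 : s0 ≠ t0 := fun h => ht0S (h ▸ hs0S)
    have hdeg : deg G t0 ≤ deg G s0 := hStop s0 hs0S t0 ⟨ht0TN.1, ht0S⟩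
    obtain ⟨w, hwv, hws, hwt, hsw, hntw⟩ :=
      exists_w G v s0 t0 hvt0a hnvs0 hvs0 hs0t0 hdeg
    -- distinctness for the switch sw G v t0 s0 w
    have hab : v ≠ t0 := G.ne_of_adj hvt0a
    have had : v ≠ w := hwv.symm
    have hbc : t0 ≠ s0 := hs0t0.symm
    have hbd : t0 ≠ w := hwt.symm
    have hcd : s0 ≠ w := hws.symm
    set G2 := sw G v t0 s0 w with hG2
    have hdegeq : ∀ u, deg G2 u = deg G u :=
      fun u => sw_deg G v t0 s0 w hab hvs0 had hbc hbd hcd hvt0a hsw hnvs0 hntw u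
    have hNv : G2.neighborSet v = insert s0 (G.neighborSet v \ {t0}) :=
      sw_nb_a G v t0 s0 w hab hvs0 had hbc hbd hcd hvt0a hsw hnvs0 hntw
    have hTN2 : T ∩ G2.neighborSet v = insert s0 ((T ∩ G.neighborSet v) \ {t0}) := by
      rw [hNv]
      ext x
      simp only [Set.mem_inter_iff, Set.mem_insert_iff, Set.mem_diff, Set.mem_singleton_iff]
      constructor
      · rintro ⟨hxT, rfl | ⟨hxn, hxt⟩⟩
        · exact Or.inl rfl
        · exact Or.inr ⟨⟨hxT, hxn⟩, hxt⟩
      · rintro (rfl | ⟨⟨hxT, hxn⟩, hxt⟩)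
        · exact ⟨hST hs0S, Or.inl rfl⟩
        · exact ⟨hxT, Or.inr ⟨hxn, hxt⟩⟩
    have hScard2 : S.ncard = (T ∩ G2.neighborSet v).ncard := by
      rw [hTN2, Set.ncard_exchange (fun h => hs0n h.2) ht0TN]
      exact hScard
    have hStop2 : ∀ s ∈ S, ∀ t ∈ T \ S, deg G2 t ≤ deg G2 s := by
      intro s hs t ht
      rw [hdegeq, hdegeq]
      exact hStop s hs t ht
    have hmeas2 : (S \ G2.neighborSet v).ncard = n := by
      have hSeq : S \ G2.neighborSet v = (S \ G.neighborSet v) \ {s0} := by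
        rw [hNv]
        ext x
        simp only [Set.mem_diff, Set.mem_insert_iff, Set.mem_singleton_iff,
          SimpleGraph.mem_neighborSet]
        constructor
        · rintro ⟨hxS, hx⟩
          push_neg at hx
          exact ⟨⟨hxS, fun hxn => ht0S (hx.2 hxn ▸ hxS)⟩, hx.1⟩
        · rintro ⟨⟨hxS, hxn⟩, hxs⟩
          exact ⟨hxS, by push_neg; exact ⟨hxs, fun h => absurd h hxn⟩⟩
      have := Set.ncard_diff_singleton_add_one
        (Set.mem_diff_of_mem hs0S hs0n) (Set.toFinite _)
      rw [hSeq]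
      omega
    obtain ⟨G', hG'deg, hG'S, hG'out⟩ := ih G2 hScard2 hStop2 hmeas2
    refine ⟨G', fun u => (hG'deg u).trans (hdegeq u), hG'S, fun u huT => ?_⟩
    rw [hG'out u huT]
    have hus : u ≠ s0 := fun h => huT (h ▸ hST hs0S)
    have hut : u ≠ t0 := fun h => huT (h ▸ ht0TN.1)
    constructor
    · intro h
      have hm : u ∈ G2.neighborSet v := h
      rw [hNv, Set.mem_insert_iff, Set.mem_diff, Set.mem_singleton_iff,
        SimpleGraph.mem_neighborSet] at hm
      rcases hm with rfl | ⟨hn, -⟩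
      · exact absurd rfl hus
      · exact hn
    · intro h
      have hm : u ∈ G2.neighborSet v := by
        rw [hNv, Set.mem_insert_iff, Set.mem_diff, Set.mem_singleton_iff,
          SimpleGraph.mem_neighborSet]
        exact Or.inr ⟨h, hut⟩
      exact hm

theorem stmt6 {V : Type*} [Fintype V] (G : SimpleGraph V) (v : V) (T : Set V)
    (hvT : v ∉ T) (S : Set V) (hST : S ⊆ T)
    (hScard : S.ncard = (T ∩ G.neighborSet v).ncard)
    (hStop : ∀ s ∈ S, ∀ t ∈ T \ S, deg G t ≤ deg G s) :
    ∃ G' : SimpleGraph V,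
      (∀ u, deg G' u = deg G u) ∧
      (∀ t ∈ T, (G'.Adj v t ↔ t ∈ S)) ∧
      (∀ u, u ∉ T → (G'.Adj v u ↔ G.Adj v u)) := by
  exact stmt6_aux v T hvT S hST _ G hScard hStop rfl
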